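/- Let 0 < q < 1, s ∈ ℝ and n ∈ ℕ. Then s·(D_q² H_n)(x,s|q) - q^{2-n}·x·(D_q H_n)(x,s|q) + q^{2-n}·{n}_q·H_n(x,s|q) = 0 as polynomials in x, where q^{2-n} denotes the real power of q and D_q² is the twice-iterated q-derivative. -/
import Mathlib


/-- The q-number `{n}_q = 1 + q + ⋯ + q^{n-1}`. -/
noncomputable def qNum (q : ℝ) (n : ℕ) : ℝ := ∑ k ∈ Finset.range n, q ^ k

/-- The q-factorial `{n}_q! = Π_{k=1}^n {k}_q`. -/
noncomputable def qFact (q : ℝ) (n : ℕ) : ℝ := ∏ k ∈ Finset.range n, qNum q (k + 1)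

/-- The even q-double factorial `{2k}_q!! = Π_{l=1}^k {2l}_q`. -/
noncomputable def qDoubleFact (q : ℝ) (k : ℕ) : ℝ := ∏ l ∈ Finset.range k, qNum q (2 * (l + 1))

/-- The q-Hermite polynomial `H_n(x,s|q) = Σ_{k=0}^{⌊n/2⌋} (-1)^k q^{k(k-1)}
({n}_q!/({n-2k}_q!·{2k}_q!!)) s^k x^{n-2k}`. -/
noncomputable def qHermite (q s : ℝ) (n : ℕ) : Polynomial ℝ :=
  ∑ k ∈ Finset.range (n / 2 + 1),
    Polynomial.C ((-1 : ℝ) ^ k * q ^ (k * (k - 1)) *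
        (qFact q n / (qFact q (n - 2 * k) * qDoubleFact q k)) * s ^ k) *
      Polynomial.X ^ (n - 2 * k)

/-- The q-derivative on polynomials: it sends `x^j` to `{j}_q x^{j-1}`. -/
noncomputable def qDeriv (q : ℝ) (f : Polynomial ℝ) : Polynomial ℝ :=
  f.sum fun j a => Polynomial.C (a * qNum q j) * Polynomial.X ^ (j - 1)
open Polynomial Finset

lemma qNum_zero (q : ℝ) : qNum q 0 = 0 := by simp [qNum]

lemma qNum_pos {q : ℝ} (hq : 0 < q) {n : ℕ} (hn : 0 < n) : 0 < qNum q n :=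
  Finset.sum_pos (fun i _ => pow_pos hq i) (by simpa using hn.ne')

lemma qFact_pos {q : ℝ} (hq : 0 < q) (n : ℕ) : 0 < qFact q n :=
  Finset.prod_pos fun i _ => qNum_pos hq (Nat.succ_pos i)

lemma qDoubleFact_pos {q : ℝ} (hq : 0 < q) (n : ℕ) : 0 < qDoubleFact q n :=
  Finset.prod_pos fun i _ => qNum_pos hq (by positivity)

lemma qNum_add (q : ℝ) (a b : ℕ) : qNum q (a + b) = qNum q a + q ^ a * qNum q b := by
  simp [qNum, Finset.sum_range_add, Finset.mul_sum, pow_add]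

lemma qFact_succ (q : ℝ) (n : ℕ) : qFact q (n + 1) = qFact q n * qNum q (n + 1) :=
  Finset.prod_range_succ _ _

lemma qDoubleFact_succ (q : ℝ) (n : ℕ) :
    qDoubleFact q (n + 1) = qDoubleFact q n * qNum q (2 * (n + 1)) :=
  Finset.prod_range_succ _ _

lemma qDeriv_monomial (q a : ℝ) (m : ℕ) :
    qDeriv q (Polynomial.C a * Polynomial.X ^ m) =
      Polynomial.C (a * qNum q m) * Polynomial.X ^ (m - 1) := by
  rw [Polynomial.C_mul_X_pow_eq_monomial, qDeriv, Polynomial.sum_monomial_index]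
  simp

lemma qDeriv_sum {ι : Type*} (q : ℝ) (t : Finset ι) (f : ι → Polynomial ℝ) :
    qDeriv q (∑ i ∈ t, f i) = ∑ i ∈ t, qDeriv q (f i) :=
  map_sum (AddMonoidHom.mk' (qDeriv q) (fun f g => Polynomial.sum_add_index f g _
    (by intro i; simp) (by intro i b c; simp [add_mul]))) f t

open Polynomial Finset

lemma key (q : ℝ) (hq : 0 < q) (s : ℝ) (m j : ℕ) :
    s * ((-1 : ℝ) ^ j * q ^ (j * (j - 1)) *
        (qFact q (m + (2*j+2)) / (qFact q (m+2) * qDoubleFact q j)) * s ^ j) *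
        qNum q (m+2) * qNum q (m+1)
      + q ^ ((2 : ℤ) - ((m + (2*j+2) : ℕ) : ℤ)) *
        ((-1 : ℝ) ^ (j+1) * q ^ ((j+1) * ((j+1) - 1)) *
          (qFact q (m + (2*j+2)) / (qFact q m * qDoubleFact q (j+1))) * s ^ (j+1)) *
        (qNum q (m + (2*j+2)) - qNum q m) = 0 := by
  have hβ : q ^ ((2 : ℤ) - ((m + (2*j+2) : ℕ) : ℤ)) = q ^ 2 / q ^ (m + (2*j+2)) := by
    rw [zpow_sub₀ hq.ne', zpow_natCast]
    norm_cast
  have hsub : qNum q (m + (2*j+2)) - qNum q m = q ^ m * qNum q (2*j+2) := by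
    rw [qNum_add]; ring
  have hexp : (j+1) * ((j+1) - 1) = j * (j - 1) + 2 * j := by
    rcases j with _ | i
    · simp
    · simp only [Nat.add_sub_cancel]
      ring
  have hF : qFact q (m+2) = qFact q m * qNum q (m+1) * qNum q (m+2) := by
    rw [qFact_succ, qFact_succ]
  have hD : qDoubleFact q (j+1) = qDoubleFact q j * qNum q (2*j+2) := by
    rw [qDoubleFact_succ]; ring_nf
  rw [hβ, hsub, hexp, hF, hD]
  have h1 : qNum q (m+1) ≠ 0 := (qNum_pos hq (by omega)).ne'
  have h2 : qNum q (m+2) ≠ 0 := (qNum_pos hq (by omega)).ne'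
  have h3 : qFact q m ≠ 0 := (qFact_pos hq m).ne'
  have h4 : qDoubleFact q j ≠ 0 := (qDoubleFact_pos hq j).ne'
  have h5 : qNum q (2*j+2) ≠ 0 := (qNum_pos hq (by omega)).ne'
  have h6 : q ≠ 0 := hq.ne'
  field_simp
  ring

noncomputable def coefH (q s : ℝ) (n k : ℕ) : ℝ :=
  (-1 : ℝ) ^ k * q ^ (k * (k - 1)) *
    (qFact q n / (qFact q (n - 2 * k) * qDoubleFact q k)) * s ^ k

lemma qHermite_eq (q s : ℝ) (n : ℕ) :
    qHermite q s n = ∑ k ∈ Finset.range (n / 2 + 1),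
      Polynomial.C (coefH q s n k) * Polynomial.X ^ (n - 2 * k) := rfl

/-- q-difference equation:
`s·D_q² H_n(x,s|q) - q^{2-n}·x·D_q H_n(x,s|q) + q^{2-n}·{n}_q·H_n(x,s|q) = 0`. -/
theorem qHermite_qDifference_equation (q : ℝ) (hq0 : 0 < q) (hq1 : q < 1) (s : ℝ) (n : ℕ) :
    Polynomial.C s * qDeriv q (qDeriv q (qHermite q s n)) -
        Polynomial.C (q ^ ((2 : ℤ) - (n : ℤ))) * Polynomial.X * qDeriv q (qHermite q s n) +
        Polynomial.C (q ^ ((2 : ℤ) - (n : ℤ)) * qNum q n) * qHermite q s n = 0 := by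
  set β : ℝ := q ^ ((2 : ℤ) - (n : ℤ)) with hβ
  have hD1 : qDeriv q (qHermite q s n) = ∑ k ∈ Finset.range (n / 2 + 1),
      C (coefH q s n k * qNum q (n - 2 * k)) * X ^ (n - 2 * k - 1) := by
    rw [qHermite_eq, qDeriv_sum]
    exact Finset.sum_congr rfl fun k _ => qDeriv_monomial q _ _
  have hD2 : qDeriv q (qDeriv q (qHermite q s n)) = ∑ k ∈ Finset.range (n / 2 + 1),
      C (coefH q s n k * qNum q (n - 2 * k) * qNum q (n - 2 * k - 1)) * X ^ (n - 2 * k - 1 - 1) := by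
    rw [hD1, qDeriv_sum]
    exact Finset.sum_congr rfl fun k _ => qDeriv_monomial q _ _
  rw [hD2, hD1, qHermite_eq, Finset.mul_sum, Finset.mul_sum, Finset.mul_sum,
    ← Finset.sum_sub_distrib, ← Finset.sum_add_distrib]
  have hstep : ∀ k ∈ Finset.range (n / 2 + 1),
      C s * (C (coefH q s n k * qNum q (n - 2 * k) * qNum q (n - 2 * k - 1)) * X ^ (n - 2 * k - 1 - 1)) -
        C β * X * (C (coefH q s n k * qNum q (n - 2 * k)) * X ^ (n - 2 * k - 1)) +
        C (β * qNum q n) * (C (coefH q s n k) * X ^ (n - 2 * k)) =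
      C (s * coefH q s n k * qNum q (n - 2 * k) * qNum q (n - 2 * k - 1)) * X ^ (n - 2 * k - 2) +
        C (β * (qNum q n - qNum q (n - 2 * k)) * coefH q s n k) * X ^ (n - 2 * k) := by
    intro k _
    by_cases h : n - 2 * k = 0
    · simp only [h, qNum_zero, Nat.zero_sub, mul_zero, zero_mul, map_zero, pow_zero, sub_zero]
      simp only [map_mul]
      ring
    · have e1 : n - 2 * k - 1 - 1 = n - 2 * k - 2 := by omega
      have e2 : n - 2 * k - 1 + 1 = n - 2 * k := by omega
      rw [e1, show (C β * X * (C (coefH q s n k * qNum q (n - 2 * k)) * X ^ (n - 2 * k - 1)) : ℝ[X])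
          = C (β * (coefH q s n k * qNum q (n - 2 * k))) * X ^ (n - 2 * k - 1 + 1) from by
        simp only [map_mul]; ring, e2]
      simp only [map_mul, map_sub]
      ring
  rw [Finset.sum_congr rfl hstep, Finset.sum_add_distrib, Finset.sum_range_succ,
    Finset.sum_range_succ']
  have htop : C (s * coefH q s n (n / 2) * qNum q (n - 2 * (n / 2)) * qNum q (n - 2 * (n / 2) - 1)) *
      (X : ℝ[X]) ^ (n - 2 * (n / 2) - 2) = 0 := by
    rcases Nat.mod_two_eq_zero_or_one n with h | h
    · have : n - 2 * (n / 2) = 0 := by omega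
      simp [this, qNum_zero]
    · have e : n - 2 * (n / 2) - 1 = 0 := by omega
      simp [e, qNum_zero]
  have hzero : C (β * (qNum q n - qNum q (n - 2 * 0)) * coefH q s n 0) * (X : ℝ[X]) ^ (n - 2 * 0) = 0 := by
    simp
  rw [htop, hzero, add_zero, add_zero, ← Finset.sum_add_distrib]
  apply Finset.sum_eq_zero
  intro j hj
  have hj' : 2 * (j + 1) ≤ n := by
    have := Finset.mem_range.mp hj
    omega
  set m : ℕ := n - 2 * (j + 1) with hm'
  have hm : n = m + (2 * j + 2) := by omega
  have e4 : n - 2 * j - 2 = m := by omega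
  have e2 : n - 2 * j - 1 = m + 1 := by omega
  have e1 : n - 2 * j = m + 2 := by omega
  have e3 : n - 2 * (j + 1) = m := by omega
  have hk := key q hq0 s m j
  rw [← hm] at hk
  have e5 : m + 2 - 1 = m + 1 := by omega
  have e6 : m + 2 - 2 = m := by omega
  simp only [coefH, e1, e2, e3, e4, e5, e6]
  rw [← add_mul, ← map_add]
  have : s * ((-1 : ℝ) ^ j * q ^ (j * (j - 1)) * (qFact q n / (qFact q (m + 2) * qDoubleFact q j)) * s ^ j) *
        qNum q (m + 2) * qNum q (m + 1) +
      β * (qNum q n - qNum q m) *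
        ((-1 : ℝ) ^ (j + 1) * q ^ ((j + 1) * (j + 1 - 1)) *
          (qFact q n / (qFact q m * qDoubleFact q (j + 1))) * s ^ (j + 1)) = 0 := by
    rw [hβ]; linear_combination hk
  rw [this, map_zero, zero_mul]
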